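/- Let 0 ≤ λ₀ < 1 and let r₁, r₂ be distinct real numbers. Then λ₀·|tanh r₂ − tanh r₁| / (1 − λ₀² tanh r₁ tanh r₂) < |tanh(r₂ − r₁)| < 1. (Hence the normal-flow map from S(r₁) to S(r₂) is k-quasiconformal with k = λ₀|tanh r₂ − tanh r₁|/(1 − λ₀² tanh r₁ tanh r₂) < 1.) -/

import Mathlib

lemma tanh_abs_lt_one (x : ℝ) : |Real.tanh x| < 1 := by
  rw [Real.tanh_eq_sinh_div_cosh, abs_div, abs_of_pos (Real.cosh_pos x),
    div_lt_one (Real.cosh_pos x)]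
  have h := Real.cosh_sq_sub_sinh_sq x
  nlinarith [abs_nonneg (Real.sinh x), sq_abs (Real.sinh x), Real.cosh_pos x]

lemma tanh_sub' (a b : ℝ) :
    Real.tanh (a - b) = (Real.tanh a - Real.tanh b) / (1 - Real.tanh a * Real.tanh b) := by
  have ha := (Real.cosh_pos a).ne'
  have hb := (Real.cosh_pos b).ne'
  have hab := (Real.cosh_pos (a - b)).ne'
  rw [Real.tanh_eq_sinh_div_cosh, Real.tanh_eq_sinh_div_cosh, Real.tanh_eq_sinh_div_cosh,
    Real.sinh_sub, Real.cosh_sub]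
  have h : Real.cosh a * Real.cosh b - Real.sinh a * Real.sinh b ≠ 0 := by
    rw [← Real.cosh_sub]; exact hab
  field_simp

/-- for `0 ≤ λ₀ < 1` and `r₁ ≠ r₂`,
`λ₀ |tanh r₂ - tanh r₁| / (1 - λ₀² tanh r₁ tanh r₂) < |tanh (r₂ - r₁)| < 1`. -/
theorem stmt_14 (lam0 r1 r2 : ℝ) (h0 : 0 ≤ lam0) (h1 : lam0 < 1) (hne : r1 ≠ r2) :
    lam0 * |Real.tanh r2 - Real.tanh r1| /
        (1 - lam0 ^ 2 * Real.tanh r1 * Real.tanh r2) <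
      |Real.tanh (r2 - r1)| ∧
    |Real.tanh (r2 - r1)| < 1 := by
  refine ⟨?_, tanh_abs_lt_one _⟩
  set t1 := Real.tanh r1 with ht1d
  set t2 := Real.tanh r2 with ht2d
  have ht1 : |t1| < 1 := tanh_abs_lt_one r1
  have ht2 : |t2| < 1 := tanh_abs_lt_one r2
  have h12 : |t1 * t2| < 1 := by
    rw [abs_mul]; nlinarith [abs_nonneg t1, abs_nonneg t2]
  have h12' := abs_lt.1 h12
  have hd : (0:ℝ) < 1 - t1 * t2 := by linarith [h12'.2]
  have hd2 : (0:ℝ) < 1 - lam0 ^ 2 * t1 * t2 := by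
    nlinarith [h12'.1, h12'.2, sq_nonneg lam0, sq_nonneg (1 - lam0)]
  have htne : 0 < |t2 - t1| := by
    rw [abs_pos, sub_ne_zero]
    intro h
    apply hne
    have hsinh : Real.sinh (r2 - r1) = 0 := by
      have := tanh_sub' r2 r1
      rw [← ht1d, ← ht2d, h, sub_self, zero_div, Real.tanh_eq_sinh_div_cosh,
        div_eq_zero_iff] at this
      rcases this with h' | h'
      · exact h'
      · exact absurd h' (Real.cosh_pos _).ne'
    have h0' : r2 - r1 = 0 := Real.sinh_injective (by simp [hsinh])
    linarith
  have habs : |Real.tanh (r2 - r1)| = |t2 - t1| / (1 - t1 * t2) := by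
    rw [tanh_sub' r2 r1, abs_div, ← ht1d, ← ht2d, mul_comm t2 t1,
      abs_of_pos hd]
  rw [habs, div_lt_div_iff₀ hd2 hd]
  have key : 0 < 1 + lam0 * (t1 * t2) := by
    nlinarith [h12'.1, h12'.2]
  nlinarith [mul_pos htne (mul_pos (by linarith : (0:ℝ) < 1 - lam0) key)]
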